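/- Let f : ℝ^d → ℝ be convex and bounded below by an affine function y ↦ c + y·p, and for ε > 0 let y_ε be a minimizer of y ↦ f(y) + ε√(1+|y|²) − y·p (such a minimizer exists). Then ε√(1+|y_ε|²) → 0 as ε → 0, and the unperturbed infimum satisfies limsup_{ε→0} inf_y (f(y) + ε√(1+|y|²) − y·p) = inf_y (f(y) − y·p). -/

import Mathlib

open Set Filter

theorem stmt_7 (d : ℕ) (f : EuclideanSpace ℝ (Fin d) → ℝ)
    (hf : ConvexOn ℝ univ f) (p : EuclideanSpace ℝ (Fin d)) (c : ℝ)
    (hbdd : ∀ y, c + (inner ℝ y p : ℝ) ≤ f y)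
    (yε : ℝ → EuclideanSpace ℝ (Fin d))
    (hmin : ∀ ε : ℝ, 0 < ε → ∀ y,
      f (yε ε) + ε * Real.sqrt (1 + ‖yε ε‖ ^ 2) - (inner ℝ (yε ε) p : ℝ) ≤
        f y + ε * Real.sqrt (1 + ‖y‖ ^ 2) - (inner ℝ y p : ℝ)) :
    Tendsto (fun ε : ℝ => ε * Real.sqrt (1 + ‖yε ε‖ ^ 2)) (nhdsWithin 0 (Ioi 0)) (nhds 0) ∧
      limsup (fun ε : ℝ => ⨅ y : EuclideanSpace ℝ (Fin d),
          (f y + ε * Real.sqrt (1 + ‖y‖ ^ 2) - (inner ℝ y p : ℝ)))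
        (nhdsWithin 0 (Ioi 0)) =
        ⨅ y : EuclideanSpace ℝ (Fin d), (f y - (inner ℝ y p : ℝ)) := by
  have hgc : ∀ y : EuclideanSpace ℝ (Fin d), c ≤ f y - (inner ℝ y p : ℝ) := by
    intro y; have := hbdd y; linarith
  have hbg : BddBelow (Set.range (fun y : EuclideanSpace ℝ (Fin d) => f y - (inner ℝ y p : ℝ))) :=
    ⟨c, by rintro _ ⟨y, rfl⟩; exact hgc y⟩
  set m := ⨅ y : EuclideanSpace ℝ (Fin d), (f y - (inner ℝ y p : ℝ)) with hm
  have hm_le : ∀ y, m ≤ f y - (inner ℝ y p : ℝ) := fun y => ciInf_le hbg y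
  have key : ∀ δ : ℝ, 0 < δ → ∀ᶠ ε in nhdsWithin (0:ℝ) (Ioi 0),
      ε * Real.sqrt (1 + ‖yε ε‖ ^ 2) < δ := by
    intro δ hδ
    obtain ⟨y, hy⟩ := exists_lt_of_ciInf_lt (show m < m + δ/2 by linarith)
    have hcont : Tendsto (fun ε : ℝ => ε * Real.sqrt (1 + ‖y‖ ^ 2))
        (nhdsWithin (0:ℝ) (Ioi 0)) (nhds 0) := by
      have h1 : Tendsto (fun ε : ℝ => ε * Real.sqrt (1 + ‖y‖ ^ 2)) (nhds 0) (nhds 0) := by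
        exact (continuous_id.mul continuous_const).tendsto' 0 0 (by simp)
      exact h1.mono_left nhdsWithin_le_nhds
    have h2 : ∀ᶠ ε in nhdsWithin (0:ℝ) (Ioi 0), ε * Real.sqrt (1 + ‖y‖ ^ 2) < δ/2 :=
      hcont.eventually (eventually_lt_nhds (by linarith))
    filter_upwards [h2, self_mem_nhdsWithin] with ε hε2 hεpos
    have h3 := hm_le (yε ε)
    have h4 := hmin ε hεpos y
    linarith
  have t1 : Tendsto (fun ε : ℝ => ε * Real.sqrt (1 + ‖yε ε‖ ^ 2))
      (nhdsWithin (0:ℝ) (Ioi 0)) (nhds 0) := by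
    rw [tendsto_order]
    constructor
    · intro a ha
      filter_upwards [self_mem_nhdsWithin] with ε hε
      have : (0:ℝ) ≤ ε * Real.sqrt (1 + ‖yε ε‖ ^ 2) :=
        mul_nonneg (le_of_lt hε) (Real.sqrt_nonneg _)
      linarith
    · intro a ha
      exact key a ha
  have t2 : Tendsto (fun ε : ℝ => ⨅ y : EuclideanSpace ℝ (Fin d),
      (f y + ε * Real.sqrt (1 + ‖y‖ ^ 2) - (inner ℝ y p : ℝ)))
      (nhdsWithin (0:ℝ) (Ioi 0)) (nhds m) := by
    rw [tendsto_order]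
    constructor
    · intro a ha
      filter_upwards [self_mem_nhdsWithin] with ε hε
      have hle : m ≤ ⨅ y : EuclideanSpace ℝ (Fin d),
          (f y + ε * Real.sqrt (1 + ‖y‖ ^ 2) - (inner ℝ y p : ℝ)) := by
        refine le_ciInf fun y => ?_
        have h1 := hm_le y
        have h2 : (0:ℝ) ≤ ε * Real.sqrt (1 + ‖y‖ ^ 2) :=
          mul_nonneg (le_of_lt hε) (Real.sqrt_nonneg _)
        linarith
      linarith
    · intro a ha
      obtain ⟨y, hy⟩ := exists_lt_of_ciInf_lt (show m < m + (a - m)/2 by linarith)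
      have hcont : Tendsto (fun ε : ℝ => ε * Real.sqrt (1 + ‖y‖ ^ 2))
          (nhdsWithin (0:ℝ) (Ioi 0)) (nhds 0) := by
        have h1 : Tendsto (fun ε : ℝ => ε * Real.sqrt (1 + ‖y‖ ^ 2)) (nhds 0) (nhds 0) := by
          exact (continuous_id.mul continuous_const).tendsto' 0 0 (by simp)
        exact h1.mono_left nhdsWithin_le_nhds
      have h2 : ∀ᶠ ε in nhdsWithin (0:ℝ) (Ioi 0), ε * Real.sqrt (1 + ‖y‖ ^ 2) < (a - m)/2 :=
        hcont.eventually (eventually_lt_nhds (by linarith))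
      filter_upwards [h2, self_mem_nhdsWithin] with ε hε2 hεpos
      have hbF : BddBelow (Set.range (fun y : EuclideanSpace ℝ (Fin d) =>
          f y + ε * Real.sqrt (1 + ‖y‖ ^ 2) - (inner ℝ y p : ℝ))) := by
        refine ⟨c, ?_⟩
        rintro _ ⟨z, rfl⟩
        have h1 := hgc z
        have h3 : (0:ℝ) ≤ ε * Real.sqrt (1 + ‖z‖ ^ 2) :=
          mul_nonneg (le_of_lt hεpos) (Real.sqrt_nonneg _)
        simp only
        linarith
      have hle := ciInf_le hbF y
      linarith
  exact ⟨t1, t2.limsup_eq⟩
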